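/- Star graph breakpoint: let G be the star on m+1 vertices with center c of degree d_c = m and m leaves of degree 1, seed s = e_c, α ∈ (0,1], and ρ₀ = (1−α)/(2m). For any ρ with max(ρ₀, 0) < ρ < 1/m (and also at ρ = ρ₀ when ρ₀ > 0), the unique minimizer x⋆ of F_ρ has support S⋆ = {c} with x_c⋆ = 2α(1−ρm)/((1+α)√m). Moreover, for every leaf ℓ (of degree d_ℓ = 1), with λ_ℓ = αρ, the degree-normalized KKT slack equals γ_ℓ = λ_ℓ − |∇_ℓ f(x⋆)| = (2α/(1+α))·(ρ − ρ₀); in particular at the breakpoint ρ = ρ₀ one has min_{i ∉ S⋆} γ_i = 0. -/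

import Mathlib

open Finset

noncomputable section

/-- Degree of vertex `i` in the (unweighted) graph with adjacency matrix `A`. -/
def deg {n : ℕ} (A : Matrix (Fin n) (Fin n) ℝ) (i : Fin n) : ℝ := ∑ j, A i j

/-- The PageRank matrix `Q = αI + ((1−α)/2)·𝓛 = ((1+α)/2)·I − ((1−α)/2)·D^{-1/2} A D^{-1/2}`. -/
def Qmat {n : ℕ} (A : Matrix (Fin n) (Fin n) ℝ) (α : ℝ) : Matrix (Fin n) (Fin n) ℝ :=
  fun i j => (if i = j then (1 + α) / 2 else 0)
    - ((1 - α) / 2) * A i j / (Real.sqrt (deg A i) * Real.sqrt (deg A j))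

/-- Smooth PageRank objective `f(x) = (1/2)⟨x, Qx⟩ − α⟨D^{-1/2} e_v, x⟩` with seed vertex `v`. -/
def fPR {n : ℕ} (A : Matrix (Fin n) (Fin n) ℝ) (α : ℝ) (v : Fin n) (x : Fin n → ℝ) : ℝ :=
  (1 / 2) * (∑ i, x i * (Qmat A α).mulVec x i) - α * (x v / Real.sqrt (deg A v))

/-- Gradient of `fPR`: `∇f(x) = Qx − α·D^{-1/2} e_v`. -/
def gradf {n : ℕ} (A : Matrix (Fin n) (Fin n) ℝ) (α : ℝ) (v : Fin n) (x : Fin n → ℝ) :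
    Fin n → ℝ :=
  fun i => (Qmat A α).mulVec x i - α * (if i = v then 1 / Real.sqrt (deg A v) else 0)

/-- Weighted ℓ1 norm `‖D^{1/2} x‖₁ = ∑ i, √(d i)·|x i|`. -/
def l1w {n : ℕ} (A : Matrix (Fin n) (Fin n) ℝ) (x : Fin n → ℝ) : ℝ :=
  ∑ i, Real.sqrt (deg A i) * |x i|

/-- ℓ1-regularized PageRank objective `F_ρ(x) = f(x) + αρ‖D^{1/2}x‖₁`. -/
def Freg {n : ℕ} (A : Matrix (Fin n) (Fin n) ℝ) (α : ℝ) (v : Fin n) (ρ : ℝ)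
    (x : Fin n → ℝ) : ℝ :=
  fPR A α v x + α * ρ * l1w A x

/-- Coordinatewise soft-thresholding at levels `t·√(d i)`: this is the proximal map
`prox_{ηg}` of `g(x) = cαρ‖D^{1/2}x‖₁` with `t = η·c·α·ρ`. -/
def softT {n : ℕ} (A : Matrix (Fin n) (Fin n) ℝ) (t : ℝ) (w : Fin n → ℝ) : Fin n → ℝ :=
  fun i => Real.sign (w i) * max (|w i| - t * Real.sqrt (deg A i)) 0

/-- Euclidean norm on `Fin n → ℝ`. -/
def enorm {n : ℕ} (x : Fin n → ℝ) : ℝ := Real.sqrt (∑ i, (x i) ^ 2)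

open Classical in
/-- Degree-weighted volume of a vertex set: `vol(S) = ∑_{i ∈ S} d i`. -/
def volS {n : ℕ} (A : Matrix (Fin n) (Fin n) ℝ) (S : Set (Fin n)) : ℝ :=
  ∑ i ∈ Finset.univ.filter (fun i => i ∈ S), deg A i

/-- Neighbor set of a vertex. -/
def nbr {n : ℕ} (A : Matrix (Fin n) (Fin n) ℝ) (i : Fin n) : Set (Fin n) := {j | A i j ≠ 0}

/-- Vertex boundary of `S`: vertices outside `S` with a neighbor in `S`. -/
def bdry {n : ℕ} (A : Matrix (Fin n) (Fin n) ℝ) (S : Set (Fin n)) : Set (Fin n) :=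
  {j | j ∉ S ∧ ∃ i ∈ S, A j i ≠ 0}

/-- `A` is the adjacency matrix of a finite undirected unweighted loopless graph
with all degrees positive. -/
structure IsGraph {n : ℕ} (A : Matrix (Fin n) (Fin n) ℝ) : Prop where
  symm : ∀ i j, A i j = A j i
  zero_one : ∀ i j, A i j = 0 ∨ A i j = 1
  loopless : ∀ i, A i i = 0
  deg_pos : ∀ i, 0 < deg A i

/-- Adjacency matrix of the star graph on `m+1` vertices with center `0`. -/
def starA (m : ℕ) : Matrix (Fin (m + 1)) (Fin (m + 1)) ℝ :=
  fun i j => if (i = 0 ∧ j ≠ 0) ∨ (j = 0 ∧ i ≠ 0) then 1 else 0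

/-- Star-graph breakpoint: for the star on `m+1` vertices with center `c = 0`
(degree `m`) and seed `e_c`, `α ∈ (0,1]`, `ρ₀ = (1−α)/(2m)`, and `ρ` with
`max(ρ₀,0) < ρ < 1/m` or `ρ = ρ₀ > 0` (equivalently `0 < ρ`, `ρ₀ ≤ ρ < 1/m`),
the unique minimizer `x⋆` of `F_ρ` has support `{c}` with
`x_c⋆ = 2α(1−ρm)/((1+α)√m)`, and for every leaf `ℓ` the degree-normalized KKT slack is
`γ_ℓ = αρ − |∇_ℓ f(x⋆)| = (2α/(1+α))·(ρ − ρ₀)`; in particular at `ρ = ρ₀` all the slacks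
of inactive coordinates are `0`. -/
lemma deg_star_zero (m : ℕ) : deg (starA m) 0 = m := by
  simp [deg, starA, Fin.sum_univ_succ, Fin.succ_ne_zero]
lemma deg_star_succ (m : ℕ) (i : Fin m) : deg (starA m) i.succ = 1 := by
  simp [deg, starA, Fin.sum_univ_succ, Fin.succ_ne_zero]
lemma mv_star_zero (m : ℕ) (α : ℝ) (x : Fin (m+1) → ℝ) :
    (Qmat (starA m) α).mulVec x 0
      = (1+α)/2 * x 0 - (1-α)/(2*Real.sqrt m) * ∑ i : Fin m, x i.succ := by
  simp only [Matrix.mulVec, dotProduct]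
  rw [Fin.sum_univ_succ]
  have h1 : Qmat (starA m) α 0 0 = (1+α)/2 := by
    simp [Qmat, starA]
  have h2 : ∀ i : Fin m, Qmat (starA m) α 0 i.succ = -((1-α)/(2*Real.sqrt m)) := by
    intro i
    simp [Qmat, starA, Fin.succ_ne_zero, (Fin.succ_ne_zero i).symm, deg_star_zero,
      deg_star_succ]
    ring
  rw [h1]
  simp only [h2, neg_mul]
  rw [Finset.sum_neg_distrib, ← Finset.mul_sum]
  ring
lemma mv_star_succ (m : ℕ) (α : ℝ) (x : Fin (m+1) → ℝ) (i : Fin m) :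
    (Qmat (starA m) α).mulVec x i.succ
      = (1+α)/2 * x i.succ - (1-α)/(2*Real.sqrt m) * x 0 := by
  simp only [Matrix.mulVec, dotProduct]
  rw [Fin.sum_univ_succ]
  have h1 : Qmat (starA m) α i.succ 0 = -((1-α)/(2*Real.sqrt m)) := by
    simp [Qmat, starA, Fin.succ_ne_zero, deg_star_zero, deg_star_succ]
    ring
  have h2 : ∀ j : Fin m, Qmat (starA m) α i.succ j.succ = if i = j then (1+α)/2 else 0 := by
    intro j
    by_cases h : i = j <;>
      simp [Qmat, starA, Fin.succ_ne_zero, h, Fin.succ_inj]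
  rw [h1]
  simp only [h2, ite_mul, zero_mul]
  rw [Finset.sum_ite_eq]
  simp only [Finset.mem_univ, if_true]
  ring

lemma Freg_star (m : ℕ) (α ρ : ℝ) (x : Fin (m+1) → ℝ) :
    Freg (starA m) α 0 ρ x =
      (1+α)/4 * (x 0)^2 + (1+α)/4 * (∑ i : Fin m, (x i.succ)^2)
      - (1-α)/(2*Real.sqrt m) * (x 0) * (∑ i : Fin m, x i.succ)
      - α * (x 0) / Real.sqrt m
      + α*ρ*(Real.sqrt m * |x 0| + ∑ i : Fin m, |x i.succ|) := by
  have hl1 : l1w (starA m) x = Real.sqrt m * |x 0| + ∑ i : Fin m, |x i.succ| := by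
    simp [l1w, Fin.sum_univ_succ, deg_star_zero, deg_star_succ]
  have hq : ∑ i, x i * (Qmat (starA m) α).mulVec x i
      = (1+α)/2 * (x 0)^2 + (1+α)/2 * (∑ i : Fin m, (x i.succ)^2)
        - (1-α)/Real.sqrt m * (x 0) * (∑ i : Fin m, x i.succ) := by
    rw [Fin.sum_univ_succ, mv_star_zero]
    have : ∀ i : Fin m, x i.succ * (Qmat (starA m) α).mulVec x i.succ
        = (1+α)/2 * (x i.succ)^2 - (1-α)/(2*Real.sqrt m) * x 0 * x i.succ := by
      intro i; rw [mv_star_succ]; ring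
    rw [Finset.sum_congr rfl (fun i _ => this i), Finset.sum_sub_distrib, ← Finset.mul_sum,
      ← Finset.mul_sum]
    ring
  rw [Freg, fPR, hq, hl1, deg_star_zero]
  ring

lemma star_key (m : ℕ) (hm : 1 ≤ m) (α ρ : ℝ) (hα : 0 < α) (hα1 : α ≤ 1)
    (hρpos : 0 < ρ) (hρlb : (1 - α) / (2 * m) ≤ ρ) (hρub : ρ < 1 / m)
    (z : Fin (m+1) → ℝ) :
    Freg (starA m) α 0 ρ
        (fun i => if i = 0 then 2*α*(1-ρ*m)/((1+α)*Real.sqrt m) else 0)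
      + α/2 * ((z 0 - 2*α*(1-ρ*m)/((1+α)*Real.sqrt m))^2 + ∑ i : Fin m, (z i.succ)^2)
      ≤ Freg (starA m) α 0 ρ z := by
  have hmpos : (0:ℝ) < m := by exact_mod_cast hm
  obtain ⟨sm, hsm⟩ : ∃ sm, Real.sqrt (m:ℝ) = sm := ⟨_, rfl⟩
  have hsmpos : 0 < sm := hsm ▸ Real.sqrt_pos.mpr hmpos
  have hsm2 : sm^2 = m := by rw [← hsm]; exact Real.sq_sqrt hmpos.le
  have hα1' : (0:ℝ) ≤ 1 - α := by linarith
  have h1α : (0:ℝ) < 1 + α := by linarith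
  have hρm : ρ * m < 1 := by
    have := (lt_div_iff₀ hmpos).mp hρub; linarith
  obtain ⟨c, hcdef⟩ : ∃ c, 2*α*(1-ρ*(m:ℝ))/((1+α)*sm) = c := ⟨_, rfl⟩
  rw [hsm, hcdef]
  have hcpos : 0 < c := by
    rw [← hcdef]
    apply div_pos (by nlinarith) (by positivity)
  have hc2 : (1+α)/2 * c - α/sm = -(α*ρ*sm) := by
    rw [← hcdef]
    field_simp
    linear_combination ρ * hsm2
  obtain ⟨S1, hS1⟩ : ∃ S, ∑ i : Fin m, z i.succ = S := ⟨_, rfl⟩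
  obtain ⟨S2, hS2⟩ : ∃ S, ∑ i : Fin m, (z i.succ)^2 = S := ⟨_, rfl⟩
  obtain ⟨S3, hS3⟩ : ∃ S, ∑ i : Fin m, |z i.succ| = S := ⟨_, rfl⟩
  have hS13 : S1 ≤ S3 := by
    rw [← hS1, ← hS3]; exact Finset.sum_le_sum (fun i _ => le_abs_self _)
  have hS3nn : 0 ≤ S3 := by
    rw [← hS3]; exact Finset.sum_nonneg (fun i _ => abs_nonneg _)
  obtain ⟨t, htdef⟩ : ∃ t, (z 0 - c)/sm = t := ⟨_, rfl⟩
  have htt : z 0 - c = t * sm := by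
    rw [← htdef]; field_simp
  have key1 : (1-α)/(2*sm) * (z 0 - c) * S1 ≤ (1-α)/4 * ((z 0 - c)^2 + S2) := by
    have step1 : (1-α)/(2*sm) * (z 0 - c) * S1 = ∑ i : Fin m, (1-α)/2 * t * z i.succ := by
      rw [← hS1, Finset.mul_sum]
      refine Finset.sum_congr rfl (fun i _ => ?_)
      rw [htt]
      field_simp
    have step2 : ∀ i ∈ (univ : Finset (Fin m)),
        (1-α)/2 * t * z i.succ ≤ (1-α)/4 * (t^2 + (z i.succ)^2) := by
      intro i _
      nlinarith [mul_nonneg hα1' (sq_nonneg (t - z i.succ))]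
    have step3 : ∑ i : Fin m, (1-α)/4 * (t^2 + (z i.succ)^2)
        = (1-α)/4 * ((m:ℝ) * t^2 + S2) := by
      rw [← Finset.mul_sum, Finset.sum_add_distrib, Finset.sum_const, card_univ,
        Fintype.card_fin, nsmul_eq_mul, hS2]
    have step4 : (1-α)/4 * ((m:ℝ) * t^2 + S2) = (1-α)/4 * ((z 0 - c)^2 + S2) := by
      rw [htt]
      linear_combination (-((1-α)/4 * t^2)) * hsm2
    calc (1-α)/(2*sm) * (z 0 - c) * S1 = ∑ i : Fin m, (1-α)/2 * t * z i.succ := step1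
      _ ≤ ∑ i : Fin m, (1-α)/4 * (t^2 + (z i.succ)^2) := Finset.sum_le_sum step2
      _ = (1-α)/4 * ((z 0 - c)^2 + S2) := by rw [step3, step4]
  have hg0 : 0 ≤ (1-α)/(2*sm) * c :=
    mul_nonneg (div_nonneg hα1' (by positivity)) hcpos.le
  have hgρ : (1-α)/(2*sm) * c ≤ α * ρ := by
    rw [← hcdef, div_mul_div_comm, div_le_iff₀ (by positivity)]
    have h2m : 1 - α ≤ 2*(ρ*m) := by
      rw [div_le_iff₀ (by positivity : (0:ℝ) < 2*m)] at hρlb; linarith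
    have hRHS : α*ρ*(2*sm*((1+α)*sm)) = 2*α*ρ*(1+α)*m := by
      linear_combination (2*α*ρ*(1+α)) * hsm2
    nlinarith [hRHS, mul_nonneg hα.le (by linarith : (0:ℝ) ≤ 2*(ρ*m) - (1-α))]
  have hT3 : (1-α)/(2*sm) * c * S1 ≤ α*ρ*S3 :=
    le_trans (mul_le_mul_of_nonneg_left hS13 hg0) (mul_le_mul_of_nonneg_right hgρ hS3nn)
  have habs : z 0 ≤ |z 0| := le_abs_self _
  have hT2 : 0 ≤ α*ρ*sm*(|z 0| - z 0) :=
    mul_nonneg (by positivity) (by linarith)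
  rw [Freg_star, Freg_star]
  simp only [if_pos rfl, if_neg (Fin.succ_ne_zero _), if_true, abs_zero, mul_zero, ne_eq,
    OfNat.ofNat_ne_zero, not_false_eq_true, zero_pow, Finset.sum_const_zero, add_zero]
  rw [hsm, hS1, hS2, hS3, abs_of_pos hcpos]
  have hident : ((1+α)/4 * (z 0)^2 + (1+α)/4 * S2
      - (1-α)/(2*sm) * (z 0) * S1 - α * (z 0) / sm + α*ρ*(sm * |z 0| + S3))
      - ((1+α)/4 * c^2 + (1+α)/4 * 0 - (1-α)/(2*sm) * c * 0 - α * c / sm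
          + α*ρ*(sm * c + 0))
      = ((1+α)/4 * (z 0 - c)^2 + (1+α)/4 * S2 - (1-α)/(2*sm) * (z 0 - c) * S1
          - α/2 * ((z 0 - c)^2 + S2))
        + α/2 * ((z 0 - c)^2 + S2)
        + α*ρ*sm*(|z 0| - z 0) + (α*ρ*S3 - (1-α)/(2*sm) * c * S1) := by
    linear_combination (z 0 - c) * hc2
  linarith [key1, hident, hT2, hT3]

theorem star_graph_breakpoint
    (m : ℕ) (hm : 1 ≤ m)
    (α ρ ρ₀ : ℝ) (hα : 0 < α) (hα1 : α ≤ 1)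
    (hρ₀ : ρ₀ = (1 - α) / (2 * m))
    (hρpos : 0 < ρ) (hρlb : ρ₀ ≤ ρ) (hρub : ρ < 1 / m)
    (xs : Fin (m + 1) → ℝ)
    (hxs : ∀ z, Freg (starA m) α 0 ρ xs ≤ Freg (starA m) α 0 ρ z) :
    Function.support xs = {0} ∧
    xs 0 = 2 * α * (1 - ρ * m) / ((1 + α) * Real.sqrt m) ∧
    (∀ ℓ : Fin (m + 1), ℓ ≠ 0 →
      α * ρ - |gradf (starA m) α 0 xs ℓ| = 2 * α / (1 + α) * (ρ - ρ₀)) ∧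
    (ρ = ρ₀ → ∀ ℓ : Fin (m + 1), ℓ ≠ 0 → α * ρ - |gradf (starA m) α 0 xs ℓ| = 0) := by
  have hmpos : (0:ℝ) < m := by exact_mod_cast hm
  have h1α : (0:ℝ) < 1 + α := by linarith
  have hρm : ρ * m < 1 := by
    have := (lt_div_iff₀ hmpos).mp hρub; linarith
  have hsmpos : 0 < Real.sqrt (m:ℝ) := Real.sqrt_pos.mpr hmpos
  have hcpos : 0 < 2*α*(1-ρ*(m:ℝ))/((1+α)*Real.sqrt m) :=
    div_pos (by nlinarith) (by positivity)
  have hkey := star_key m hm α ρ hα hα1 hρpos (hρ₀ ▸ hρlb) hρub xs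
  have hmin := hxs (fun i => if i = 0 then 2*α*(1-ρ*(m:ℝ))/((1+α)*Real.sqrt m) else 0)
  have hsq : 0 ≤ ∑ i : Fin m, (xs i.succ)^2 :=
    Finset.sum_nonneg fun i _ => sq_nonneg _
  have hE : (xs 0 - 2*α*(1-ρ*(m:ℝ))/((1+α)*Real.sqrt m))^2
      + ∑ i : Fin m, (xs i.succ)^2 ≤ 0 := by
    by_contra h
    push_neg at h
    linarith [mul_pos hα h]
  have hxs0 : xs 0 = 2*α*(1-ρ*(m:ℝ))/((1+α)*Real.sqrt m) := by
    have h1 : (xs 0 - 2*α*(1-ρ*(m:ℝ))/((1+α)*Real.sqrt m))^2 = 0 :=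
      le_antisymm (by linarith) (sq_nonneg _)
    have := pow_eq_zero_iff (n := 2) (by norm_num) |>.mp h1
    linarith [this]
  have hxsl : ∀ i : Fin m, xs i.succ = 0 := by
    have hsum0 : ∑ i : Fin m, (xs i.succ)^2 = 0 := by
      have := sq_nonneg (xs 0 - 2*α*(1-ρ*(m:ℝ))/((1+α)*Real.sqrt m))
      linarith
    intro i
    have := (Finset.sum_eq_zero_iff_of_nonneg (fun i _ => sq_nonneg (xs i.succ))).mp
      hsum0 i (Finset.mem_univ i)
    exact pow_eq_zero_iff (n := 2) (by norm_num) |>.mp this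
  have h3 : ∀ ℓ : Fin (m + 1), ℓ ≠ 0 →
      α * ρ - |gradf (starA m) α 0 xs ℓ| = 2 * α / (1 + α) * (ρ - ρ₀) := by
    intro ℓ hℓ
    obtain ⟨j, rfl⟩ := Fin.eq_succ_of_ne_zero hℓ
    have hg : gradf (starA m) α 0 xs j.succ
        = -((1-α)/(2*Real.sqrt m) * (2*α*(1-ρ*(m:ℝ))/((1+α)*Real.sqrt m))) := by
      simp only [gradf, if_neg (Fin.succ_ne_zero j), mul_zero, sub_zero]
      rw [mv_star_succ, hxsl j, hxs0]
      ring
    rw [hg, abs_neg, abs_of_nonneg (mul_nonneg (div_nonneg (by linarith) (by positivity))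
      hcpos.le), hρ₀]
    obtain ⟨sm, hsm⟩ : ∃ sm, Real.sqrt (m:ℝ) = sm := ⟨_, rfl⟩
    have hsmpos' : 0 < sm := hsm ▸ hsmpos
    have hm' : (m:ℝ) = sm^2 := by rw [← hsm]; exact (Real.sq_sqrt hmpos.le).symm
    rw [hsm, hm']
    have hsm0 : sm ≠ 0 := hsmpos'.ne'
    field_simp
    ring
  refine ⟨?_, hxs0, h3, fun hρeq ℓ hℓ => by rw [h3 ℓ hℓ, hρeq]; ring⟩
  ext i
  simp only [Function.mem_support, Set.mem_singleton_iff]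
  refine Fin.cases ?_ (fun j => ?_) i
  · simp [hxs0, hcpos.ne']
  · simp [hxsl j, Fin.succ_ne_zero]
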